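/- Suppose the edges of the complete graph K_s (s ≥ 2) are coloured with exactly s-1 colours so that every colour class is a matching and every set of 4 vertices spans edges of either exactly 3 or exactly 6 distinct colours. Then s = 2^p for some nonnegative integer p. -/
import Mathlib

open Finset

private lemma sym2_ne_colour {V : Type*} {ι : Type*} (c : Sym2 V → ι)
    (hmatch : ∀ e f : Sym2 V, ¬ e.IsDiag → ¬ f.IsDiag → e ≠ f → c e = c f →
      ∀ v : V, ¬ (v ∈ e ∧ v ∈ f))
    {x y z : V} (hy : y ≠ x) (hz : z ≠ x) (hyz : y ≠ z) :
    c s(x, y) ≠ c s(x, z) := by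
  intro hc
  refine hmatch s(x, y) s(x, z) ?_ ?_ ?_ hc x ⟨?_, ?_⟩
  · simp [Sym2.mk_isDiag_iff]; exact fun h => hy h.symm
  · simp [Sym2.mk_isDiag_iff]; exact fun h => hz h.symm
  · simp [Sym2.eq_iff]; tauto
  · simp
  · simp

private lemma exists_partner {V ι : Type*} [Fintype V] [DecidableEq V] [Fintype ι]
    [DecidableEq ι] {s : ℕ} (hs : 2 ≤ s) (hcard : Fintype.card V = s)
    (hι : Fintype.card ι = s - 1) (c : Sym2 V → ι)
    (hmatch : ∀ e f : Sym2 V, ¬ e.IsDiag → ¬ f.IsDiag → e ≠ f → c e = c f →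
      ∀ v : V, ¬ (v ∈ e ∧ v ∈ f))
    (i : ι) (v : V) : ∃ w, w ≠ v ∧ c s(v, w) = i := by
  classical
  set T : ι → Finset (Sym2 V) := fun i => univ.filter (fun e => ¬ e.IsDiag ∧ c e = i) with hT
  set toF : Sym2 V → Finset V :=
    fun e => Sym2.lift ⟨fun a b => ({a, b} : Finset V), fun a b => by
      simp [Finset.pair_comm]⟩ e with htoF
  have htoF_mem : ∀ (e : Sym2 V) (v : V), v ∈ toF e ↔ v ∈ e := by
    intro e v
    induction e using Sym2.ind with
    | _ a b => simp [htoF]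
  have htoF_card : ∀ e : Sym2 V, ¬ e.IsDiag → (toF e).card = 2 := by
    intro e he
    induction e using Sym2.ind with
    | _ a b =>
      rw [Sym2.mk_isDiag_iff] at he
      simp [htoF, Finset.card_insert_of_notMem, he]
  have hTdisj : ∀ j : ι, (T j : Set (Sym2 V)).PairwiseDisjoint toF := by
    intro j e he f hf hef
    simp only [Finset.coe_filter, Set.mem_setOf_eq, hT, mem_univ, true_and] at he hf
    simp only [Function.onFun]
    rw [Finset.disjoint_left]
    intro x hxe hxf
    rw [htoF_mem] at hxe hxf
    exact hmatch e f he.1 hf.1 hef (he.2.trans hf.2.symm) x ⟨hxe, hxf⟩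
  have hVi : ∀ j : ι, ((T j).biUnion toF).card = 2 * (T j).card := by
    intro j
    rw [Finset.card_biUnion (fun e he f hf hef => hTdisj j (by simpa using he) (by simpa using hf) hef)]
    rw [Finset.sum_congr rfl (fun e he => htoF_card e (Finset.mem_filter.mp he).2.1)]
    simp [mul_comm]
  have hsum : ∑ j : ι, (T j).card = Nat.choose s 2 := by
    have h1 : (univ.filter fun e : Sym2 V => ¬ e.IsDiag).card = Nat.choose s 2 := by
      rw [← Fintype.card_subtype, Sym2.card_subtype_not_diag, hcard]
    rw [← h1]
    rw [Finset.card_eq_sum_card_fiberwise (f := c)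
      (t := (univ : Finset ι)) (fun x _ => mem_univ _)]
    refine Finset.sum_congr rfl fun j _ => ?_
    rw [Finset.filter_filter]
  have heven : 2 * Nat.choose s 2 = s * (s - 1) := by
    rw [Nat.choose_two_right, Nat.mul_div_cancel']
    rcases Nat.even_or_odd s with h | h
    · exact Dvd.dvd.mul_right h.two_dvd _
    · exact Dvd.dvd.mul_left (Nat.Odd.sub_odd h odd_one).two_dvd _
  have hsum2 : ∑ j : ι, ((T j).biUnion toF).card = (s - 1) * s := by
    simp_rw [hVi]
    rw [← Finset.mul_sum, hsum, heven, Nat.mul_comm]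
  have hle : ∀ j : ι, ((T j).biUnion toF).card ≤ s := fun j => hcard ▸ Finset.card_le_univ _
  have hall : ∀ j : ι, ((T j).biUnion toF).card = s := by
    by_contra h
    push_neg at h
    obtain ⟨j0, hj0⟩ := h
    have hlt : ((T j0).biUnion toF).card < s := lt_of_le_of_ne (hle j0) hj0
    have : ∑ j : ι, ((T j).biUnion toF).card < ∑ _j : ι, s :=
      Finset.sum_lt_sum (fun j _ => hle j) ⟨j0, mem_univ _, hlt⟩
    rw [hsum2, Finset.sum_const, smul_eq_mul, Finset.card_univ, hι] at this
    omega
  have hv : v ∈ (T i).biUnion toF := by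
    have := Finset.eq_univ_of_card _ ((hall i).trans hcard.symm)
    rw [this]; exact mem_univ v
  obtain ⟨e, heT, hve⟩ := Finset.mem_biUnion.mp hv
  rw [htoF_mem] at hve
  obtain ⟨hed, hec⟩ := (Finset.mem_filter.mp heT).2
  refine ⟨(Sym2.Mem.other' hve), ?_, ?_⟩
  · intro h
    rw [← Sym2.other_spec' hve, h, Sym2.mk_isDiag_iff] at hed
    exact hed rfl
  · rw [Sym2.other_spec' hve]; exact hec

/-- if the edges of `K_s` (`s ≥ 2`) are coloured with exactly `s-1` colours,
every colour class is a matching, and every 4 vertices span edges of exactly 3 or exactly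
6 distinct colours, then `s = 2^p` for some `p`. -/
theorem stmt_12 {V : Type*} [Fintype V] [DecidableEq V] (s : ℕ) (hs : 2 ≤ s)
    (hcard : Fintype.card V = s) (c : Sym2 V → Fin (s - 1))
    (hmatch : ∀ e f : Sym2 V, ¬ e.IsDiag → ¬ f.IsDiag → e ≠ f → c e = c f →
      ∀ v : V, ¬ (v ∈ e ∧ v ∈ f))
    (hall : ∀ i : Fin (s - 1), ∃ e : Sym2 V, ¬ e.IsDiag ∧ c e = i)
    (h4 : ∀ a b d e : V, a ≠ b → a ≠ d → a ≠ e → b ≠ d → b ≠ e → d ≠ e →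
      (({s(a, b), s(a, d), s(a, e), s(b, d), s(b, e), s(d, e)} : Finset (Sym2 V)).image
        c).card = 3 ∨
      (({s(a, b), s(a, d), s(a, e), s(b, d), s(b, e), s(d, e)} : Finset (Sym2 V)).image
        c).card = 6) :
    ∃ p : ℕ, s = 2 ^ p := by
  classical
  have hpart : ∀ (i : Fin (s - 1)) (v : V), ∃ w, w ≠ v ∧ c s(v, w) = i :=
    exists_partner hs hcard (Fintype.card_fin _) c hmatch
  -- the partner function
  let f : Fin (s - 1) → V → V := fun i v => Classical.choose (hpart i v)
  have hfne : ∀ i v, f i v ≠ v := fun i v => (Classical.choose_spec (hpart i v)).1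
  have hfc : ∀ i v, c s(v, f i v) = i := fun i v => (Classical.choose_spec (hpart i v)).2
  have hfu : ∀ (i : Fin (s - 1)) (v w : V), w ≠ v → c s(v, w) = i → w = f i v := by
    intro i v w hwv hc
    by_contra hne
    exact sym2_ne_colour c hmatch hwv (hfne i v) hne (hc.trans (hfc i v).symm)
  have hfinv : ∀ i, Function.Involutive (f i) := by
    intro i v
    refine (hfu i (f i v) v (hfne i v).symm ?_).symm
    rw [Sym2.eq_swap]; exact hfc i v
  -- the key commutation
  have hkey : ∀ (i j : Fin (s - 1)), i ≠ j → ∀ v, f i (f j v) = f j (f i v) := by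
    intro i j hij v
    obtain ⟨b, hb⟩ : ∃ b, f i v = b := ⟨_, rfl⟩
    obtain ⟨d, hd⟩ : ∃ d, f j v = d := ⟨_, rfl⟩
    obtain ⟨e, he⟩ : ∃ e, f j b = e := ⟨_, rfl⟩
    rw [hb, hd, he]
    have hab : v ≠ b := hb ▸ (hfne i v).symm
    have had : v ≠ d := hd ▸ (hfne j v).symm
    have hbd : b ≠ d := by
      intro h
      apply hij
      rw [← hfc i v, hb, h, ← hd, hfc j v]
    have hbe : b ≠ e := he ▸ (hfne j b).symm
    have hae : v ≠ e := by
      intro h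
      apply hbd
      have := hfinv j b
      rw [he, ← h, hd] at this
      exact this.symm
    have hde : d ≠ e := by
      intro h
      apply hab
      have := hfinv j v
      rw [hd, h, ← he, hfinv j] at this
      conv_lhs => rw [← this]
    have hcab : c s(v, b) = i := hb ▸ hfc i v
    have hcad : c s(v, d) = j := hd ▸ hfc j v
    have hcbe : c s(b, e) = j := he ▸ hfc j b
    have h36 := h4 v b d e hab had hae hbd hbe hde
    have h3 : (({s(v, b), s(v, d), s(v, e), s(b, d), s(b, e), s(d, e)} :
        Finset (Sym2 V)).image c).card = 3 := by
      refine h36.resolve_right fun h6 => ?_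
      have hsub : (({s(v, b), s(v, d), s(v, e), s(b, d), s(b, e), s(d, e)} :
          Finset (Sym2 V)).image c) ⊆
          {c s(v, b), c s(v, d), c s(v, e), c s(b, d), c s(d, e)} := by
        intro x hx
        simp only [Finset.mem_image, Finset.mem_insert, Finset.mem_singleton] at hx ⊢
        obtain ⟨y, hy, rfl⟩ := hx
        rcases hy with rfl | rfl | rfl | rfl | rfl | rfl
        · exact Or.inl rfl
        · exact Or.inr (Or.inl rfl)
        · exact Or.inr (Or.inr (Or.inl rfl))
        · exact Or.inr (Or.inr (Or.inr (Or.inl rfl)))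
        · exact Or.inr (Or.inl (hcbe.trans hcad.symm))
        · exact Or.inr (Or.inr (Or.inr (Or.inr rfl)))
      have h5 : (({c s(v, b), c s(v, d), c s(v, e), c s(b, d), c s(d, e)} :
          Finset (Fin (s - 1)))).card ≤ 5 := by
        refine le_trans (Finset.card_insert_le _ _) (Nat.succ_le_succ ?_)
        refine le_trans (Finset.card_insert_le _ _) (Nat.succ_le_succ ?_)
        refine le_trans (Finset.card_insert_le _ _) (Nat.succ_le_succ ?_)
        refine le_trans (Finset.card_insert_le _ _) (Nat.succ_le_succ ?_)
        exact (Finset.card_singleton _).le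
      have := (Finset.card_le_card hsub).trans h5
      omega
    have hcde : c s(d, e) = i := by
      by_contra hne
      have hk1 : c s(v, e) ≠ i := by
        rw [← hcab]
        exact sym2_ne_colour c hmatch hae.symm hab.symm hbe.symm
      have hk1j : c s(v, e) ≠ j := by
        rw [← hcbe, show s(v, e) = s(e, v) from Sym2.eq_swap,
          show s(b, e) = s(e, b) from Sym2.eq_swap]
        exact sym2_ne_colour c hmatch hae hbe hab
      have hk3j : c s(d, e) ≠ j := by
        rw [← hcad, show s(v, d) = s(d, v) from Sym2.eq_swap]
        exact sym2_ne_colour c hmatch hde.symm had hae.symm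
      have hk31 : c s(d, e) ≠ c s(v, e) := by
        rw [show s(v, e) = s(e, v) from Sym2.eq_swap,
          show s(d, e) = s(e, d) from Sym2.eq_swap]
        exact sym2_ne_colour c hmatch hde hae had.symm
      have hsub4 : ({i, j, c s(v, e), c s(d, e)} : Finset (Fin (s - 1))) ⊆
          (({s(v, b), s(v, d), s(v, e), s(b, d), s(b, e), s(d, e)} :
            Finset (Sym2 V)).image c) := by
        intro x hx
        simp only [Finset.mem_insert, Finset.mem_singleton] at hx
        rcases hx with rfl | rfl | rfl | rfl
        · exact hcab ▸ Finset.mem_image_of_mem c (by simp)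
        · exact hcad ▸ Finset.mem_image_of_mem c (by simp)
        · exact Finset.mem_image_of_mem c (by simp)
        · exact Finset.mem_image_of_mem c (by simp)
      have h44 : ({i, j, c s(v, e), c s(d, e)} : Finset (Fin (s - 1))).card = 4 := by
        rw [Finset.card_insert_of_notMem (by
          simp only [Finset.mem_insert, Finset.mem_singleton]
          push_neg
          exact ⟨hij, fun h => hk1 h.symm, fun h => hne h.symm⟩),
          Finset.card_insert_of_notMem (by
            simp only [Finset.mem_insert, Finset.mem_singleton]
            push_neg
            exact ⟨fun h => hk1j h.symm, fun h => hk3j h.symm⟩),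
          Finset.card_insert_of_notMem (by
            simp only [Finset.mem_singleton]
            exact fun h => hk31 h.symm),
          Finset.card_singleton]
      have := Finset.card_le_card hsub4
      omega
    exact (hfu i d e hde.symm hcde).symm
  -- the permutations
  let σ : Fin (s - 1) → Equiv.Perm V := fun i => Function.Involutive.toPerm (f i) (hfinv i)
  have hσ : ∀ i v, σ i v = f i v := fun i v => rfl
  have hσ2 : ∀ i, σ i * σ i = 1 := by
    intro i
    ext v
    simp only [Equiv.Perm.mul_apply, Equiv.Perm.one_apply, hσ]
    exact hfinv i v
  have hσcomm : ∀ i j, σ i * σ j = σ j * σ i := by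
    intro i j
    rcases eq_or_ne i j with rfl | h
    · rfl
    · ext v
      simp only [Equiv.Perm.mul_apply, hσ]
      exact hkey i j h v
  set S : Set (Equiv.Perm V) := Set.range σ with hS
  set G : Subgroup (Equiv.Perm V) := Subgroup.closure S with hG
  have hc1 : ∀ x ∈ S, ∀ g ∈ G, Commute x g := by
    intro x hx g hg
    induction hg using Subgroup.closure_induction with
    | mem y hy =>
      obtain ⟨i, rfl⟩ := hx
      obtain ⟨j, rfl⟩ := hy
      exact hσcomm i j
    | one => exact Commute.one_right x
    | mul y z _ _ hy hz => exact hy.mul_right hz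
    | inv y _ hy => exact hy.inv_right
  have hc2 : ∀ g ∈ G, ∀ h ∈ G, Commute g h := by
    intro g hg
    induction hg using Subgroup.closure_induction with
    | mem y hy => exact fun h hh => hc1 y hy h hh
    | one => exact fun h _ => Commute.one_left h
    | mul y z _ _ hy hz => exact fun h hh => (hy h hh).mul_left (hz h hh)
    | inv y _ hy => exact fun h hh => (hy h hh).inv_left
  have hsq : ∀ g ∈ G, g * g = 1 := by
    intro g hg
    induction hg using Subgroup.closure_induction with
    | mem y hy =>
      obtain ⟨i, rfl⟩ := hy
      exact hσ2 i
    | one => exact one_mul 1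
    | mul y z hy hz ihy ihz =>
      have hcomm := hc2 y hy z hz
      calc y * z * (y * z) = y * (z * y) * z := by group
        _ = y * (y * z) * z := by rw [hcomm.symm.eq]
        _ = (y * y) * (z * z) := by group
        _ = 1 := by rw [ihy, ihz, one_mul]
    | inv y _ ihy => rw [← mul_inv_rev, ihy, inv_one]
  haveI : Fact (Nat.Prime 2) := ⟨Nat.prime_two⟩
  have hpG : IsPGroup 2 G := by
    intro g
    refine ⟨1, ?_⟩
    have : ((g ^ (2 ^ 1) : G) : Equiv.Perm V) = 1 := by
      push_cast
      rw [pow_succ, pow_one]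
      exact hsq g g.2
    exact Subtype.ext this
  obtain ⟨n, hn⟩ := IsPGroup.iff_card.mp hpG
  have : Nonempty V := by
    rw [← Fintype.card_pos_iff, hcard]
    omega
  obtain ⟨v0⟩ := this
  have horb : MulAction.orbit G v0 = Set.univ := by
    apply Set.eq_univ_of_forall
    intro w
    rcases eq_or_ne w v0 with rfl | hw
    · exact MulAction.mem_orbit_self w
    · refine ⟨⟨σ (c s(v0, w)), Subgroup.subset_closure ⟨_, rfl⟩⟩, ?_⟩
      show σ (c s(v0, w)) v0 = w
      rw [hσ]
      exact (hfu _ v0 w hw rfl).symm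
  have hcardorb : Nat.card (MulAction.orbit G v0) = s := by
    rw [horb, ← hcard]
    simp only [Nat.card_eq_fintype_card]
    exact Fintype.card_congr (Equiv.Set.univ V)
  have hdvd : s ∣ 2 ^ n := by
    rw [← hn, ← hcardorb, Nat.card_congr (MulAction.orbitEquivQuotientStabilizer G v0)]
    exact Subgroup.card_quotient_dvd_card _
  obtain ⟨p, _, hp2⟩ := (Nat.dvd_prime_pow Nat.prime_two).mp hdvd
  exact ⟨p, hp2⟩
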